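/- Let w ∈ S_n be minimal non-separable, i.e., w contains 3142 or 2413, but both the subsequence w(1),…,w(n−1) and the subsequence w(2),…,w(n) avoid the patterns 3142 and 2413. If w(1) < w(n), then: w(i) > w(n) for 2 ≤ i ≤ n+1−w(n); w(1) < w(i) < w(n) for n+2−w(n) ≤ i ≤ n−w(1); and w(i) < w(1) for n−w(1)+1 ≤ i ≤ n−1. Likewise, if w(1) > w(n), then: w(i) < w(n) for 2 ≤ i ≤ w(n); w(n) < w(i) < w(1) for w(n)+1 ≤ i ≤ w(1)−1; and w(i) > w(1) for w(1) ≤ i ≤ n−1. -/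

import Mathlib

namespace SepPaper

/-- Number of inversions of a permutation of `Fin n`, i.e. its Coxeter length. -/
def invLen {n : ℕ} (w : Equiv.Perm (Fin n)) : ℕ :=
  (Finset.univ.filter fun p : Fin n × Fin n => p.1 < p.2 ∧ w p.2 < w p.1).card

/-- Right weak order. -/
def leR {n : ℕ} (v u : Equiv.Perm (Fin n)) : Prop :=
  invLen v + invLen (v⁻¹ * u) = invLen u

/-- Left weak order. -/
def leL {n : ℕ} (v u : Equiv.Perm (Fin n)) : Prop :=
  invLen v + invLen (u * v⁻¹) = invLen u

instance {n : ℕ} (v u : Equiv.Perm (Fin n)) : Decidable (leR v u) :=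
  inferInstanceAs (Decidable (_ = _))

instance {n : ℕ} (v u : Equiv.Perm (Fin n)) : Decidable (leL v u) :=
  inferInstanceAs (Decidable (_ = _))

/-- The permutation 3142 (one-indexed) as a permutation of `Fin 4`. -/
def perm3142 : Equiv.Perm (Fin 4) :=
  ⟨![2, 0, 3, 1], ![1, 3, 0, 2], by decide, by decide⟩

/-- The permutation 2413 (one-indexed) as a permutation of `Fin 4`. -/
def perm2413 : Equiv.Perm (Fin 4) :=
  ⟨![1, 3, 0, 2], ![2, 0, 3, 1], by decide, by decide⟩

/-- `w` contains the pattern `σ`. -/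
def ContainsPattern {n k : ℕ} (w : Equiv.Perm (Fin n)) (σ : Equiv.Perm (Fin k)) : Prop :=
  ∃ f : Fin k → Fin n, StrictMono f ∧ ∀ a b : Fin k, σ a < σ b ↔ w (f a) < w (f b)

/-- A permutation is separable if it avoids 3142 and 2413. -/
def Separable {n : ℕ} (w : Equiv.Perm (Fin n)) : Prop :=
  ¬ ContainsPattern w perm3142 ∧ ¬ ContainsPattern w perm2413

/-- The longest element `w₀` of `S_n`, `i ↦ n+1-i` (one-indexed). -/
def w0 (n : ℕ) : Equiv.Perm (Fin n) :=
  ⟨Fin.rev, Fin.rev, Fin.rev_rev, Fin.rev_rev⟩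


/-- `w` contains the pattern `σ` using only indices from `S`. -/
def ContainsPatternOn {n k : ℕ} (w : Equiv.Perm (Fin n)) (σ : Equiv.Perm (Fin k))
    (S : Set (Fin n)) : Prop :=
  ∃ f : Fin k → Fin n, StrictMono f ∧ (∀ a, f a ∈ S) ∧
    ∀ a b : Fin k, σ a < σ b ↔ w (f a) < w (f b)

/-- `w` is minimal non-separable: `w` contains 3142 or 2413, but both the subsequence
`w(1),…,w(n-1)` (indices `< n-1`, zero-indexed) and the subsequence `w(2),…,w(n)`
(indices `≥ 1`, zero-indexed) avoid 3142 and 2413. -/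
def MinimalNonSeparable {n : ℕ} (w : Equiv.Perm (Fin n)) : Prop :=
  (ContainsPattern w perm3142 ∨ ContainsPattern w perm2413) ∧
  ¬ ContainsPatternOn w perm3142 {i | (i : ℕ) < n - 1} ∧
  ¬ ContainsPatternOn w perm2413 {i | (i : ℕ) < n - 1} ∧
  ¬ ContainsPatternOn w perm3142 {i | 1 ≤ (i : ℕ)} ∧
  ¬ ContainsPatternOn w perm2413 {i | 1 ≤ (i : ℕ)}

/-! ### Auxiliary lemmas -/

lemma strictMono_vec4 {n : ℕ} {a b c d : Fin n} (h1 : (a:ℕ) < b) (h2 : (b:ℕ) < c)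
    (h3 : (c:ℕ) < d) : StrictMono ![a, b, c, d] := by
  intro x y hxy
  rw [Fin.lt_def] at hxy
  fin_cases x <;> fin_cases y <;>
    simp only [show ∀ h, (![a,b,c,d] ⟨0,h⟩) = a from fun _ => rfl,
      show ∀ h, (![a,b,c,d] ⟨1,h⟩) = b from fun _ => rfl,
      show ∀ h, (![a,b,c,d] ⟨2,h⟩) = c from fun _ => rfl,
      show ∀ h, (![a,b,c,d] ⟨3,h⟩) = d from fun _ => rfl, Fin.lt_def] at hxy ⊢ <;>
    simp at hxy <;> omega

lemma mkPat {n : ℕ} (σ : Equiv.Perm (Fin 4)) (w : Equiv.Perm (Fin n)) (S : Set (Fin n))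
    {a b c d : Fin n}
    (hab : (a:ℕ) < b) (hbc : (b:ℕ) < c) (hcd : (c:ℕ) < d)
    (ha : a ∈ S) (hb : b ∈ S) (hc : c ∈ S) (hd : d ∈ S)
    (hp : ∀ x y : Fin 4, σ x < σ y ↔ w (![a,b,c,d] x) < w (![a,b,c,d] y)) :
    ContainsPatternOn w σ S := by
  refine ⟨![a,b,c,d], strictMono_vec4 hab hbc hcd, ?_, hp⟩
  intro x; fin_cases x <;> assumption

lemma mk3142 {n : ℕ} (w : Equiv.Perm (Fin n)) (S : Set (Fin n)) {a b c d : Fin n}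
    (hab : (a:ℕ) < b) (hbc : (b:ℕ) < c) (hcd : (c:ℕ) < d)
    (ha : a ∈ S) (hb : b ∈ S) (hc : c ∈ S) (hd : d ∈ S)
    (o1 : (w b : ℕ) < w d) (o2 : (w d : ℕ) < w a) (o3 : (w a : ℕ) < w c) :
    ContainsPatternOn w perm3142 S := by
  refine mkPat _ w S hab hbc hcd ha hb hc hd ?_
  intro x y
  fin_cases x <;> fin_cases y <;>
    simp only [show ∀ h, (![a,b,c,d] ⟨0,h⟩) = a from fun _ => rfl,
      show ∀ h, (![a,b,c,d] ⟨1,h⟩) = b from fun _ => rfl,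
      show ∀ h, (![a,b,c,d] ⟨2,h⟩) = c from fun _ => rfl,
      show ∀ h, (![a,b,c,d] ⟨3,h⟩) = d from fun _ => rfl] <;>
    first
    | exact iff_of_true (by decide) (by rw [Fin.lt_def]; omega)
    | exact iff_of_false (by decide) (by rw [Fin.lt_def]; omega)

lemma mk2413 {n : ℕ} (w : Equiv.Perm (Fin n)) (S : Set (Fin n)) {a b c d : Fin n}
    (hab : (a:ℕ) < b) (hbc : (b:ℕ) < c) (hcd : (c:ℕ) < d)
    (ha : a ∈ S) (hb : b ∈ S) (hc : c ∈ S) (hd : d ∈ S)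
    (o1 : (w c : ℕ) < w a) (o2 : (w a : ℕ) < w d) (o3 : (w d : ℕ) < w b) :
    ContainsPatternOn w perm2413 S := by
  refine mkPat _ w S hab hbc hcd ha hb hc hd ?_
  intro x y
  fin_cases x <;> fin_cases y <;>
    simp only [show ∀ h, (![a,b,c,d] ⟨0,h⟩) = a from fun _ => rfl,
      show ∀ h, (![a,b,c,d] ⟨1,h⟩) = b from fun _ => rfl,
      show ∀ h, (![a,b,c,d] ⟨2,h⟩) = c from fun _ => rfl,
      show ∀ h, (![a,b,c,d] ⟨3,h⟩) = d from fun _ => rfl] <;>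
    first
    | exact iff_of_true (by decide) (by rw [Fin.lt_def]; omega)
    | exact iff_of_false (by decide) (by rw [Fin.lt_def]; omega)

lemma pat_rev {n : ℕ} {σ σ' : Equiv.Perm (Fin 4)}
    (key : ∀ x y : Fin 4, σ x < σ y ↔ σ' y < σ' x)
    (w : Equiv.Perm (Fin n)) (f : Fin 4 → Fin n) :
    (∀ x y : Fin 4, σ x < σ y ↔ (w0 n * w) (f x) < (w0 n * w) (f y)) ↔
    (∀ x y : Fin 4, σ' x < σ' y ↔ w (f x) < w (f y)) := by
  have hrev : ∀ u v : Fin n, (w0 n * w) u < (w0 n * w) v ↔ w v < w u := by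
    intro u v
    show Fin.rev (w u) < Fin.rev (w v) ↔ _
    exact Fin.rev_lt_rev
  constructor
  · intro h x y
    rw [← key y x, h y x, hrev]
  · intro h x y
    rw [hrev, key x y, h y x]

lemma cp_rev {n : ℕ} {σ σ' : Equiv.Perm (Fin 4)}
    (key : ∀ x y : Fin 4, σ x < σ y ↔ σ' y < σ' x)
    (w : Equiv.Perm (Fin n)) :
    ContainsPattern (w0 n * w) σ ↔ ContainsPattern w σ' :=
  exists_congr fun f => and_congr_right fun _ => pat_rev key w f

lemma cpOn_rev {n : ℕ} {σ σ' : Equiv.Perm (Fin 4)}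
    (key : ∀ x y : Fin 4, σ x < σ y ↔ σ' y < σ' x)
    (w : Equiv.Perm (Fin n)) (S : Set (Fin n)) :
    ContainsPatternOn (w0 n * w) σ S ↔ ContainsPatternOn w σ' S :=
  exists_congr fun f => and_congr_right fun _ => and_congr_right fun _ => pat_rev key w f

lemma key_pat : ∀ x y : Fin 4, perm3142 x < perm3142 y ↔ perm2413 y < perm2413 x := by decide

lemma key_pat' : ∀ x y : Fin 4, perm2413 x < perm2413 y ↔ perm3142 y < perm3142 x := by decide

lemma mns_rev {n : ℕ} (w : Equiv.Perm (Fin n)) (hw : MinimalNonSeparable w) :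
    MinimalNonSeparable (w0 n * w) := by
  obtain ⟨hc, h1, h2, h3, h4⟩ := hw
  refine ⟨?_, ?_, ?_, ?_, ?_⟩
  · rcases hc with h | h
    · exact Or.inr ((cp_rev key_pat' w).mpr h)
    · exact Or.inl ((cp_rev key_pat w).mpr h)
  · rw [cpOn_rev key_pat w]; exact h2
  · rw [cpOn_rev key_pat' w]; exact h1
  · rw [cpOn_rev key_pat w]; exact h4
  · rw [cpOn_rev key_pat' w]; exact h3

set_option maxHeartbeats 1000000 in
lemma main_lemma {n : ℕ} (w : Equiv.Perm (Fin n)) (hw : MinimalNonSeparable w)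
    (first lastIdx : Fin n) (hf : (first : ℕ) = 0) (hl : (lastIdx : ℕ) = n - 1)
    (hlt : (w first : ℕ) < (w lastIdx : ℕ)) :
    ∀ i : Fin n,
      (1 ≤ (i:ℕ) → (i:ℕ) ≤ n - 1 - (w lastIdx : ℕ) → (w lastIdx : ℕ) < (w i : ℕ)) ∧
      (n - (w lastIdx : ℕ) ≤ (i:ℕ) → (i:ℕ) + 2 + (w first : ℕ) ≤ n →
        (w first : ℕ) < (w i : ℕ) ∧ (w i : ℕ) < (w lastIdx : ℕ)) ∧
      (n - 1 - (w first : ℕ) ≤ (i:ℕ) → (i:ℕ) + 2 ≤ n → (w i : ℕ) < (w first : ℕ)) := by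
  obtain ⟨hcont, hA3, hA2, hB3, hB2⟩ := hw
  have hWLn : (w lastIdx : ℕ) < n := (w lastIdx).isLt
  -- extract the crossing pair a0 (big) and b0 (small)
  obtain ⟨a0, b0, ha0pos, hab, hb0lt, ha0big, hb0small⟩ :
      ∃ a0 b0 : Fin n, 0 < (a0:ℕ) ∧ (a0:ℕ) < (b0:ℕ) ∧ (b0:ℕ) < n - 1 ∧
        (w lastIdx : ℕ) < (w a0 : ℕ) ∧ (w b0 : ℕ) < (w first : ℕ) := by
    have extract : ∀ σ : Equiv.Perm (Fin 4),
        ¬ ContainsPatternOn w σ {i | (i : ℕ) < n - 1} →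
        ¬ ContainsPatternOn w σ {i | 1 ≤ (i : ℕ)} →
        ContainsPattern w σ →
        ∃ f : Fin 4 → Fin n, StrictMono f ∧
          (∀ x y : Fin 4, σ x < σ y ↔ w (f x) < w (f y)) ∧
          (f 0 : ℕ) = 0 ∧ (f 3 : ℕ) = n - 1 := by
      intro σ hA hB ⟨f, hsm, hp⟩
      refine ⟨f, hsm, hp, ?_, ?_⟩
      · by_contra h
        have h0 : 1 ≤ (f 0 : ℕ) := by omega
        refine hB ⟨f, hsm, fun x => ?_, hp⟩
        have : f 0 ≤ f x := hsm.monotone (Fin.zero_le x)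
        simp only [Set.mem_setOf_eq]
        rw [Fin.le_def] at this
        omega
      · by_contra h
        have h3 : (f 3 : ℕ) < n - 1 := by
          have := (f 3).isLt; omega
        refine hA ⟨f, hsm, fun x => ?_, hp⟩
        have : f x ≤ f 3 := hsm.monotone (Fin.le_last x)
        simp only [Set.mem_setOf_eq]
        rw [Fin.le_def] at this
        omega
    have hfirst_of : ∀ g : Fin n, (g : ℕ) = 0 → g = first :=
      fun g hg => Fin.val_inj.mp (by omega)
    have hlast_of : ∀ g : Fin n, (g : ℕ) = n - 1 → g = lastIdx :=
      fun g hg => Fin.val_inj.mp (by omega)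
    rcases hcont with h | h
    · -- 3142 case: impossible since w(first) < w(lastIdx)
      obtain ⟨f, hsm, hp, hf0, hf3⟩ := extract _ hA3 hB3 h
      have e0 : f 0 = first := hfirst_of _ hf0
      have e3 : f 3 = lastIdx := hlast_of _ hf3
      have : w (f 3) < w (f 0) := (hp 3 0).mp (by decide)
      rw [e0, e3, Fin.lt_def] at this
      omega
    · obtain ⟨f, hsm, hp, hf0, hf3⟩ := extract _ hA2 hB2 h
      have e0 : f 0 = first := hfirst_of _ hf0
      have e3 : f 3 = lastIdx := hlast_of _ hf3
      have h01 : f 0 < f 1 := hsm (by decide)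
      have h12 : f 1 < f 2 := hsm (by decide)
      have h23 : f 2 < f 3 := hsm (by decide)
      rw [Fin.lt_def] at h01 h12 h23
      have hb : w (f 3) < w (f 1) := (hp 3 1).mp (by decide)
      have hs : w (f 2) < w (f 0) := (hp 2 0).mp (by decide)
      rw [e3, Fin.lt_def] at hb
      rw [e0, Fin.lt_def] at hs
      exact ⟨f 1, f 2, by omega, h12, by omega, hb, hs⟩
  have memA : ∀ g : Fin n, (g : ℕ) < n - 1 → g ∈ {i : Fin n | (i : ℕ) < n - 1} :=
    fun g hg => hg
  have memB : ∀ g : Fin n, 1 ≤ (g : ℕ) → g ∈ {i : Fin n | 1 ≤ (i : ℕ)} :=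
    fun g hg => hg
  have hWFn : (w first : ℕ) < n := (w first).isLt
  have hWa0 : (w a0 : ℕ) < n := (w a0).isLt
  have hn4 : 4 ≤ n := by omega
  -- Lemma A : no small value before a big value (among interior positions)
  have LA : ∀ p q : Fin n, (p:ℕ) < (q:ℕ) → 0 < (p:ℕ) → (q:ℕ) < n - 1 →
      (w p:ℕ) < (w first:ℕ) → (w lastIdx:ℕ) < (w q:ℕ) → False := by
    intro p q hpq hp hq hps hqb
    rcases lt_trichotomy (b0:ℕ) (q:ℕ) with hbq | hbq | hbq
    · rcases lt_trichotomy (w a0:ℕ) (w q:ℕ) with hv | hv | hv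
      · exact hB3 (mk3142 w _ hab hbq (by omega)
          (memB _ (by omega)) (memB _ (by omega)) (memB _ (by omega)) (memB _ (by omega))
          (by omega) ha0big hv)
      · have : a0 = q := w.injective (Fin.val_inj.mp hv)
        rw [← Fin.val_inj] at this
        omega
      · exact hA2 (mk2413 w _ (by omega) hab hbq
          (memA _ (by omega)) (memA _ (by omega)) (memA _ (by omega)) (memA _ (by omega))
          hb0small (by omega) hv)
    · have : b0 = q := Fin.val_inj.mp hbq
      have : (w b0 : ℕ) = w q := by rw [this]
      omega
    · rcases lt_trichotomy (w p:ℕ) (w b0:ℕ) with hv | hv | hv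
      · exact hA3 (mk3142 w _ (by omega) hpq hbq
          (memA _ (by omega)) (memA _ (by omega)) (memA _ (by omega)) (memA _ (by omega))
          hv hb0small (by omega))
      · have : p = b0 := w.injective (Fin.val_inj.mp hv)
        rw [← Fin.val_inj] at this
        omega
      · exact hB2 (mk2413 w _ hpq hbq (by omega)
          (memB _ (by omega)) (memB _ (by omega)) (memB _ (by omega)) (memB _ (by omega))
          hv (by omega) hqb)
  -- Lemma B : no middle value before a big value
  have LB : ∀ p q : Fin n, (p:ℕ) < (q:ℕ) → 0 < (p:ℕ) → (q:ℕ) < n - 1 →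
      (w first:ℕ) < (w p:ℕ) → (w p:ℕ) < (w lastIdx:ℕ) → (w lastIdx:ℕ) < (w q:ℕ) → False := by
    intro p q hpq hp hq hpm1 hpm2 hqb
    rcases lt_trichotomy (q:ℕ) (b0:ℕ) with hqb0 | hqb0 | hqb0
    · exact hB2 (mk2413 w _ hpq hqb0 (by omega)
        (memB _ (by omega)) (memB _ (by omega)) (memB _ (by omega)) (memB _ (by omega))
        (by omega) hpm2 hqb)
    · have : q = b0 := Fin.val_inj.mp hqb0
      have : (w q : ℕ) = w b0 := by rw [this]
      omega
    · exact LA b0 q hqb0 (by omega) hq hb0small hqb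
  -- Lemma C : no small value before a middle value
  have LC : ∀ p q : Fin n, (p:ℕ) < (q:ℕ) → 0 < (p:ℕ) → (q:ℕ) < n - 1 →
      (w p:ℕ) < (w first:ℕ) → (w first:ℕ) < (w q:ℕ) → (w q:ℕ) < (w lastIdx:ℕ) → False := by
    intro p q hpq hp hq hps hqm1 hqm2
    rcases lt_trichotomy (a0:ℕ) (p:ℕ) with hap | hap | hap
    · exact hA2 (mk2413 w _ (by omega) hap hpq
        (memA _ (by omega)) (memA _ (by omega)) (memA _ (by omega)) (memA _ (by omega))
        hps hqm1 (by omega))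
    · have : a0 = p := Fin.val_inj.mp hap
      have : (w a0 : ℕ) = w p := by rw [this]
      omega
    · exact LA p a0 hap hp (by omega) hps ha0big
  -- value-injectivity helpers
  have inj_first : ∀ j : Fin n, (w j : ℕ) = (w first : ℕ) → (j : ℕ) = 0 := by
    intro j hj
    have : j = first := w.injective (Fin.val_inj.mp hj)
    rw [← Fin.val_inj] at this
    omega
  have inj_last : ∀ j : Fin n, (w j : ℕ) = (w lastIdx : ℕ) → (j : ℕ) = n - 1 := by
    intro j hj
    have : j = lastIdx := w.injective (Fin.val_inj.mp hj)
    rw [← Fin.val_inj] at this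
    omega
  -- cardinality of the set of big positions
  have hBigCard : (Finset.univ.filter fun i : Fin n => (w lastIdx:ℕ) < (w i:ℕ)).card
      = n - 1 - (w lastIdx:ℕ) := by
    have himg : (Finset.univ.filter fun i : Fin n => (w lastIdx:ℕ) < (w i:ℕ))
        = (Finset.Ioi (w lastIdx)).image ⇑w⁻¹ := by
      ext i
      simp only [Finset.mem_filter, Finset.mem_univ, true_and, Finset.mem_image,
        Finset.mem_Ioi]
      constructor
      · intro h
        exact ⟨w i, by rw [Fin.lt_def]; exact h, w.symm_apply_apply i⟩
      · rintro ⟨v, hv, rfl⟩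
        rw [Fin.lt_def] at hv
        rw [show w (w⁻¹ v) = v from w.apply_symm_apply v]
        exact hv
    rw [himg, Finset.card_image_of_injective _ (Equiv.injective _), Fin.card_Ioi]
  have hSmallCard : (Finset.univ.filter fun i : Fin n => (w i:ℕ) < (w first:ℕ)).card
      = (w first:ℕ) := by
    have himg : (Finset.univ.filter fun i : Fin n => (w i:ℕ) < (w first:ℕ))
        = (Finset.Iio (w first)).image ⇑w⁻¹ := by
      ext i
      simp only [Finset.mem_filter, Finset.mem_univ, true_and, Finset.mem_image,
        Finset.mem_Iio]
      constructor
      · intro h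
        exact ⟨w i, by rw [Fin.lt_def]; exact h, w.symm_apply_apply i⟩
      · rintro ⟨v, hv, rfl⟩
        rw [Fin.lt_def] at hv
        rw [show w (w⁻¹ v) = v from w.apply_symm_apply v]
        exact hv
    rw [himg, Finset.card_image_of_injective _ (Equiv.injective _), Fin.card_Iio]
  -- characterization of big positions
  have hBig : ∀ i : Fin n, 0 < (i:ℕ) → (i:ℕ) < n-1 →
      ((i:ℕ) ≤ n - 1 - (w lastIdx:ℕ) ↔ (w lastIdx:ℕ) < (w i:ℕ)) := by
    intro i hi1 hi2
    constructor
    · intro hle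
      by_contra hnb
      push_neg at hnb
      have hne : (w i:ℕ) ≠ (w lastIdx:ℕ) := fun h => by have := inj_last i h; omega
      have hsub : (Finset.univ.filter fun j : Fin n => (w lastIdx:ℕ) < (w j:ℕ))
          ⊆ Finset.Ioo first i := by
        intro j hj
        rw [Finset.mem_filter] at hj
        obtain ⟨-, hjb⟩ := hj
        rw [Finset.mem_Ioo, Fin.lt_def, Fin.lt_def]
        have hj0 : 0 < (j:ℕ) := by
          rcases Nat.eq_zero_or_pos (j:ℕ) with h | h
          · have : j = first := Fin.val_inj.mp (by omega)
            rw [this] at hjb; omega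
          · exact h
        have hjn : (j:ℕ) < n - 1 := by
          have := j.isLt
          rcases Nat.lt_or_ge (j:ℕ) (n-1) with h | h
          · exact h
          · have : j = lastIdx := Fin.val_inj.mp (by omega)
            rw [this] at hjb; omega
        have hji : (j:ℕ) < (i:ℕ) := by
          rcases lt_trichotomy (i:ℕ) (j:ℕ) with h | h | h
          · exfalso
            rcases lt_trichotomy (w i:ℕ) (w first:ℕ) with hv | hv | hv
            · exact LA i j h hi1 hjn hv hjb
            · have := inj_first i hv; omega
            · exact LB i j h hi1 hjn hv (by omega) hjb
          · exfalso
            have : i = j := Fin.val_inj.mp h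
            rw [← this] at hjb; omega
          · exact h
        omega
      have hcard := Finset.card_le_card hsub
      rw [hBigCard, Fin.card_Ioo] at hcard
      omega
    · intro hbig
      by_contra hgt
      push_neg at hgt
      have hsub : Finset.Ioc first i
          ⊆ (Finset.univ.filter fun j : Fin n => (w lastIdx:ℕ) < (w j:ℕ)) := by
        intro j hj
        rw [Finset.mem_Ioc, Fin.lt_def, Fin.le_def] at hj
        rw [Finset.mem_filter]
        refine ⟨Finset.mem_univ _, ?_⟩
        rcases lt_trichotomy (j:ℕ) (i:ℕ) with h | h | h
        · by_contra hnb
          push_neg at hnb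
          have hne : (w j:ℕ) ≠ (w lastIdx:ℕ) := fun hh => by have := inj_last j hh; omega
          rcases lt_trichotomy (w j:ℕ) (w first:ℕ) with hv | hv | hv
          · exact LA j i h (by omega) hi2 hv hbig
          · have := inj_first j hv; omega
          · exact LB j i h (by omega) hi2 hv (by omega) hbig
        · have : j = i := Fin.val_inj.mp h
          rw [this]; exact hbig
        · omega
      have hcard := Finset.card_le_card hsub
      rw [hBigCard, Fin.card_Ioc] at hcard
      omega
  -- characterization of small positions
  have hSmall : ∀ i : Fin n, 0 < (i:ℕ) → (i:ℕ) < n-1 →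
      (n - 1 - (w first:ℕ) ≤ (i:ℕ) ↔ (w i:ℕ) < (w first:ℕ)) := by
    intro i hi1 hi2
    constructor
    · intro hge
      by_contra hns
      push_neg at hns
      have hne : (w i:ℕ) ≠ (w first:ℕ) := fun h => by have := inj_first i h; omega
      have hsub : (Finset.univ.filter fun j : Fin n => (w j:ℕ) < (w first:ℕ))
          ⊆ Finset.Ioo i lastIdx := by
        intro j hj
        rw [Finset.mem_filter] at hj
        obtain ⟨-, hjs⟩ := hj
        rw [Finset.mem_Ioo, Fin.lt_def, Fin.lt_def]
        have hj0 : 0 < (j:ℕ) := by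
          rcases Nat.eq_zero_or_pos (j:ℕ) with h | h
          · have : j = first := Fin.val_inj.mp (by omega)
            rw [this] at hjs; omega
          · exact h
        have hjn : (j:ℕ) < n - 1 := by
          have := j.isLt
          rcases Nat.lt_or_ge (j:ℕ) (n-1) with h | h
          · exact h
          · have : j = lastIdx := Fin.val_inj.mp (by omega)
            rw [this] at hjs; omega
        have hij : (i:ℕ) < (j:ℕ) := by
          rcases lt_trichotomy (j:ℕ) (i:ℕ) with h | h | h
          · exfalso
            have hneL : (w i:ℕ) ≠ (w lastIdx:ℕ) := fun hh => by have := inj_last i hh; omega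
            rcases lt_trichotomy (w i:ℕ) (w lastIdx:ℕ) with hv | hv | hv
            · exact LC j i h hj0 hi2 hjs (by omega) hv
            · exact absurd hv hneL
            · exact LA j i h hj0 hi2 hjs hv
          · exfalso
            have : j = i := Fin.val_inj.mp h
            rw [this] at hjs; omega
          · exact h
        omega
      have hcard := Finset.card_le_card hsub
      rw [hSmallCard, Fin.card_Ioo] at hcard
      omega
    · intro hsmall
      by_contra hlt'
      push_neg at hlt'
      have hsub : Finset.Ico i lastIdx
          ⊆ (Finset.univ.filter fun j : Fin n => (w j:ℕ) < (w first:ℕ)) := by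
        intro j hj
        rw [Finset.mem_Ico, Fin.lt_def, Fin.le_def] at hj
        rw [Finset.mem_filter]
        refine ⟨Finset.mem_univ _, ?_⟩
        rcases lt_trichotomy (i:ℕ) (j:ℕ) with h | h | h
        · by_contra hns
          push_neg at hns
          have hne : (w j:ℕ) ≠ (w first:ℕ) := fun hh => by
            have : j = first := w.injective (Fin.val_inj.mp hh)
            rw [← Fin.val_inj] at this
            omega
          have hneL : (w j:ℕ) ≠ (w lastIdx:ℕ) := fun hh => by have := inj_last j hh; omega
          rcases lt_trichotomy (w j:ℕ) (w lastIdx:ℕ) with hv | hv | hv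
          · exact LC i j h hi1 (by omega) hsmall (by omega) hv
          · exact absurd hv hneL
          · exact LA i j h hi1 (by omega) hsmall hv
        · have : i = j := Fin.val_inj.mp h
          rw [← this]; exact hsmall
        · omega
      have hcard := Finset.card_le_card hsub
      rw [hSmallCard, Fin.card_Ico] at hcard
      omega
  -- conclusion
  intro i
  have hin : (i:ℕ) < n := i.isLt
  refine ⟨fun h1 h2 => ?_, fun h1 h2 => ?_, fun h1 h2 => ?_⟩
  · exact (hBig i (by omega) (by omega)).mp h2
  · have hi1 : 0 < (i:ℕ) := by omega
    have hi2 : (i:ℕ) < n - 1 := by omega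
    have hnb : ¬ (w lastIdx:ℕ) < (w i:ℕ) := fun h => by
      have := (hBig i hi1 hi2).mpr h; omega
    have hns : ¬ (w i:ℕ) < (w first:ℕ) := fun h => by
      have := (hSmall i hi1 hi2).mpr h; omega
    push_neg at hnb hns
    have hne1 : (w i:ℕ) ≠ (w first:ℕ) := fun h => by have := inj_first i h; omega
    have hne2 : (w i:ℕ) ≠ (w lastIdx:ℕ) := fun h => by have := inj_last i h; omega
    omega
  · exact (hSmall i (by omega) (by omega)).mp h1

/-- the structure of minimal non-separable permutations.  Here all
positions and values are translated to the one-indexed convention: the position of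
`i : Fin n` is `(i : ℕ) + 1` and the value `w(i)` is `(w i : ℕ) + 1`; `first` and
`lastIdx` are the first and last positions. -/
theorem stmt_8 {n : ℕ} (w : Equiv.Perm (Fin n)) (hw : MinimalNonSeparable w)
    (first lastIdx : Fin n) (hf : (first : ℕ) = 0) (hl : (lastIdx : ℕ) = n - 1) :
    (((w first : ℕ) + 1 < (w lastIdx : ℕ) + 1 →
      ∀ i : Fin n,
        (2 ≤ (i : ℕ) + 1 → (i : ℕ) + 1 ≤ n + 1 - ((w lastIdx : ℕ) + 1) →
          (w lastIdx : ℕ) + 1 < (w i : ℕ) + 1) ∧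
        (n + 2 - ((w lastIdx : ℕ) + 1) ≤ (i : ℕ) + 1 → (i : ℕ) + 1 ≤ n - ((w first : ℕ) + 1) →
          (w first : ℕ) + 1 < (w i : ℕ) + 1 ∧ (w i : ℕ) + 1 < (w lastIdx : ℕ) + 1) ∧
        (n - ((w first : ℕ) + 1) + 1 ≤ (i : ℕ) + 1 → (i : ℕ) + 1 ≤ n - 1 →
          (w i : ℕ) + 1 < (w first : ℕ) + 1)) ∧
    ((w lastIdx : ℕ) + 1 < (w first : ℕ) + 1 →
      ∀ i : Fin n,
        (2 ≤ (i : ℕ) + 1 → (i : ℕ) + 1 ≤ (w lastIdx : ℕ) + 1 →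
          (w i : ℕ) + 1 < (w lastIdx : ℕ) + 1) ∧
        ((w lastIdx : ℕ) + 1 + 1 ≤ (i : ℕ) + 1 → (i : ℕ) + 1 ≤ ((w first : ℕ) + 1) - 1 →
          (w lastIdx : ℕ) + 1 < (w i : ℕ) + 1 ∧ (w i : ℕ) + 1 < (w first : ℕ) + 1) ∧
        ((w first : ℕ) + 1 ≤ (i : ℕ) + 1 → (i : ℕ) + 1 ≤ n - 1 →
          (w first : ℕ) + 1 < (w i : ℕ) + 1))) := by
  have hWFn : (w first : ℕ) < n := (w first).isLt
  have hWLn : (w lastIdx : ℕ) < n := (w lastIdx).isLt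
  constructor
  · intro hlt i
    have h := main_lemma w hw first lastIdx hf hl (by omega) i
    obtain ⟨p1, p2, p3⟩ := h
    have hin : (i:ℕ) < n := i.isLt
    refine ⟨fun a b => ?_, fun a b => ?_, fun a b => ?_⟩
    · have := p1 (by omega) (by omega); omega
    · have := p2 (by omega) (by omega); omega
    · have := p3 (by omega) (by omega); omega
  · intro hlt i
    set v : Equiv.Perm (Fin n) := w0 n * w with hv
    have hvw : ∀ j : Fin n, (v j : ℕ) = n - 1 - (w j : ℕ) := by
      intro j
      show ((Fin.rev (w j)) : ℕ) = n - 1 - (w j : ℕ)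
      rw [Fin.val_rev]
      omega
    have hmns : MinimalNonSeparable v := mns_rev w hw
    have hvlt : (v first : ℕ) < (v lastIdx : ℕ) := by
      rw [hvw, hvw]; omega
    have h := main_lemma v hmns first lastIdx hf hl hvlt i
    obtain ⟨p1, p2, p3⟩ := h
    have eF := hvw first
    have eL := hvw lastIdx
    have eI := hvw i
    have hin : (i:ℕ) < n := i.isLt
    have hWin : (w i : ℕ) < n := (w i).isLt
    refine ⟨fun a b => ?_, fun a b => ?_, fun a b => ?_⟩
    · have := p1 (by omega) (by omega); omega
    · have := p2 (by omega) (by omega); omega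
    · have := p3 (by omega) (by omega); omega

end SepPaper
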